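/- For every λ ≥ 0 and every measurable function h: D → ℝ₊, ∫_D e^{−λ t}·(Λh)(t,x) dt dx = (2/√(1+2λ))·∫_D exp( −(λu + (u−v)(1 + √(1+2λ))) )·h(u,v) du dv. -/

import Mathlib

open MeasureTheory ProbabilityTheory Real Set
open scoped ENNReal NNReal Classical

noncomputable section

/-- `B` is a Brownian motion with drift `μ` started at `0` under the probability
measure `P`: it has almost-everywhere defined continuous paths, `B 0 = 0`, Gaussian
increments `B t - B s ~ N(μ (t-s), t-s)` for `0 ≤ s ≤ t`, and independent increments. -/
structure IsDriftBrownianMotion {Ω : Type*} [MeasurableSpace Ω]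
    (P : Measure Ω) (B : ℝ → Ω → ℝ) (μ : ℝ) : Prop where
  isProb : IsProbabilityMeasure P
  meas : ∀ t : ℝ, Measurable (B t)
  init : ∀ ω, B 0 ω = 0
  cont : ∀ ω, Continuous fun t => B t ω
  incr : ∀ s t : ℝ, 0 ≤ s → s ≤ t →
    Measure.map (fun ω => B t ω - B s ω) P
      = gaussianReal (μ * (t - s)) ((t - s).toNNReal)
  indep : ∀ (n : ℕ) (t : ℕ → ℝ), (∀ i, 0 ≤ t i) → Monotone t →
    iIndepFun
      (fun (i : Fin n) ω => B (t (i + 1)) ω - B (t i) ω) P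

/-- The running supremum `S_t = sup_{0 ≤ s ≤ t} B_s`. -/
def runSup {Ω : Type*} (B : ℝ → Ω → ℝ) (t : ℝ) (ω : Ω) : ℝ :=
  sSup ((fun s => B s ω) '' Set.Icc 0 t)

/-- The set `{t ≥ 0 : m · S_t < t}`. -/
def hitSet {Ω : Type*} (B : ℝ → Ω → ℝ) (m : ℝ) (ω : Ω) : Set ℝ :=
  {t : ℝ | 0 ≤ t ∧ m * runSup B t ω < t}

/-- `T_m = inf {t ≥ 0 : m · S_t < t}` (with the convention `sInf ∅ = 0` of `Real.sInf`;
the event `{T_m < ∞}` is expressed as `(hitSet B m ω).Nonempty`). -/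
def hitTime {Ω : Type*} (B : ℝ → Ω → ℝ) (m : ℝ) (ω : Ω) : ℝ :=
  sInf (hitSet B m ω)

namespace LambdaAux

open Filter

/-- 1-d lintegral change of variables. -/
lemma lintegral_image {s : Set ℝ} {f f' : ℝ → ℝ} (hs : MeasurableSet s)
    (hf' : ∀ x ∈ s, HasDerivWithinAt f (f' x) s x) (hf : Set.InjOn f s) (g : ℝ → ℝ≥0∞) :
    ∫⁻ x in f '' s, g x = ∫⁻ x in s, ENNReal.ofReal |f' x| * g (f x) := by
  simpa only [ContinuousLinearMap.det_toSpanSingleton] using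
    lintegral_image_eq_lintegral_abs_det_fderiv_mul volume hs
      (fun x hx => (hf' x hx).hasFDerivWithinAt) hf g

lemma lintegral_gauss :
    ∫⁻ x : ℝ, ENNReal.ofReal (Real.exp (-x ^ 2)) = ENNReal.ofReal (Real.sqrt π) := by
  rw [← ofReal_integral_eq_lintegral_ofReal]
  · congr 1
    have h := integral_gaussian 1
    simpa using h
  · simpa using integrable_exp_neg_mul_sq (by norm_num : (0:ℝ) < 1)
  · exact Filter.Eventually.of_forall fun x => (Real.exp_pos _).le

lemma lintegral_neg_self (f : ℝ → ℝ≥0∞) (hf : Measurable f) :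
    ∫⁻ x : ℝ, f (-x) = ∫⁻ x : ℝ, f x :=
  (Measure.measurePreserving_neg (volume : Measure ℝ)).lintegral_comp hf

lemma glasser {p q : ℝ} (hp : 0 < p) (hq : 0 < q) :
    ∫⁻ u in Set.Ioi (0:ℝ),
        ENNReal.ofReal (Real.exp (-(Real.sqrt p * u - Real.sqrt q / u) ^ 2))
      = ENNReal.ofReal (Real.sqrt π / (2 * Real.sqrt p)) := by
  set sp := Real.sqrt p with hsp_def
  set sq := Real.sqrt q with hsq_def
  have hsp : 0 < sp := Real.sqrt_pos.2 hp
  have hsq : 0 < sq := Real.sqrt_pos.2 hq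
  set φ : ℝ → ℝ := fun u => sp * u - sq / u with hφ_def
  have hφmeas : Measurable φ := by
    simp only [hφ_def, div_eq_mul_inv]
    exact (measurable_id.const_mul sp).sub (measurable_inv.const_mul sq)
  have hEmeas : Measurable fun u : ℝ => ENNReal.ofReal (Real.exp (-(φ u) ^ 2)) :=
    ((hφmeas.pow_const 2).neg.exp).ennreal_ofReal
  -- derivative
  have hderiv : ∀ u ∈ Set.Ioi (0:ℝ), HasDerivWithinAt φ (sp + sq / u ^ 2) (Set.Ioi 0) u := by
    intro u hu
    have hu0 : u ≠ 0 := ne_of_gt hu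
    have h1 : HasDerivAt (fun u : ℝ => sp * u) sp u := by
      simpa using (hasDerivAt_id u).const_mul sp
    have h2 : HasDerivAt (fun u : ℝ => sq / u) (-sq / u ^ 2) u := by
      have := (hasDerivAt_inv hu0).const_mul sq
      simpa [div_eq_mul_inv, neg_div, mul_div_assoc] using this
    have h3 := h1.sub h2
    have heq : sp - -sq / u ^ 2 = sp + sq / u ^ 2 := by ring
    rw [heq] at h3
    exact h3.hasDerivWithinAt
  -- injectivity
  have hmono : StrictMonoOn φ (Set.Ioi (0:ℝ)) := by
    intro a ha b hb hab
    have ha0 : (0:ℝ) < a := ha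
    have h1 : sp * a < sp * b := by nlinarith
    have h2 : sq / b < sq / a := div_lt_div_of_pos_left hsq ha0 hab
    simp only [hφ_def]
    linarith
  have hinj : Set.InjOn φ (Set.Ioi 0) := hmono.injOn
  -- surjectivity
  have himg : φ '' Set.Ioi 0 = Set.univ := by
    apply Set.eq_univ_of_forall
    intro w
    set r := Real.sqrt (w ^ 2 + 4 * sp * sq) with hr_def
    have hr2 : r ^ 2 = w ^ 2 + 4 * sp * sq := Real.sq_sqrt (by positivity)
    have hr0 : 0 ≤ r := Real.sqrt_nonneg _
    have hrw : -w < r := by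
      by_contra hcon
      push_neg at hcon
      nlinarith
    have hwr : (0:ℝ) < w + r := by linarith
    set u₀ := (w + r) / (2 * sp) with hu₀_def
    have hu₀ : 0 < u₀ := div_pos hwr (by linarith)
    refine ⟨u₀, hu₀, ?_⟩
    show sp * u₀ - sq / u₀ = w
    rw [hu₀_def]
    field_simp
    linear_combination hr2
  -- the two integrals
  set I1 := ∫⁻ u in Set.Ioi (0:ℝ), ENNReal.ofReal (Real.exp (-(φ u) ^ 2)) with hI1_def
  set I2 := ∫⁻ u in Set.Ioi (0:ℝ), ENNReal.ofReal (Real.exp (-(φ u) ^ 2) / u ^ 2) with hI2_def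
  -- pointwise splitting
  have hstep : ∀ u ∈ Set.Ioi (0:ℝ),
      ENNReal.ofReal |sp + sq / u ^ 2| * ENNReal.ofReal (Real.exp (-(φ u) ^ 2))
        = ENNReal.ofReal sp * ENNReal.ofReal (Real.exp (-(φ u) ^ 2))
          + ENNReal.ofReal sq * ENNReal.ofReal (Real.exp (-(φ u) ^ 2) / u ^ 2) := by
    intro u hu
    have hu0 : (0:ℝ) < u := hu
    rw [abs_of_pos (by positivity), ENNReal.ofReal_add hsp.le (by positivity), add_mul]
    congr 1
    rw [← ENNReal.ofReal_mul (by positivity), ← ENNReal.ofReal_mul hsq.le]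
    congr 1
    rw [div_mul_eq_mul_div, mul_div_assoc]
  -- relation 1
  have R1 : ENNReal.ofReal (Real.sqrt π)
      = ENNReal.ofReal sp * I1 + ENNReal.ofReal sq * I2 := by
    calc ENNReal.ofReal (Real.sqrt π)
        = ∫⁻ x : ℝ in Set.univ, ENNReal.ofReal (Real.exp (-x ^ 2)) := by
          rw [setLIntegral_univ, lintegral_gauss]
      _ = ∫⁻ u in Set.Ioi (0:ℝ),
            ENNReal.ofReal |sp + sq / u ^ 2| * ENNReal.ofReal (Real.exp (-(φ u) ^ 2)) := by
          rw [← himg, lintegral_image measurableSet_Ioi hderiv hinj]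
      _ = ∫⁻ u in Set.Ioi (0:ℝ),
            (ENNReal.ofReal sp * ENNReal.ofReal (Real.exp (-(φ u) ^ 2))
              + ENNReal.ofReal sq * ENNReal.ofReal (Real.exp (-(φ u) ^ 2) / u ^ 2)) :=
          setLIntegral_congr_fun measurableSet_Ioi hstep
      _ = ENNReal.ofReal sp * I1 + ENNReal.ofReal sq * I2 := by
          rw [lintegral_add_left (hEmeas.const_mul _),
            lintegral_const_mul' _ _ ENNReal.ofReal_ne_top,
            lintegral_const_mul' _ _ ENNReal.ofReal_ne_top]
  -- second substitution: I1 = ofReal k * I2 with k = sq / sp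
  set k := sq / sp with hk_def
  have hk : 0 < k := div_pos hsq hsp
  have R2 : I1 = ENNReal.ofReal k * I2 := by
    have himg2 : (fun u : ℝ => k / u) '' Set.Ioi 0 = Set.Ioi 0 := by
      ext w
      constructor
      · rintro ⟨u, hu, rfl⟩
        exact div_pos hk hu
      · intro hw
        exact ⟨k / w, div_pos hk hw, by field_simp⟩
    have hderiv2 : ∀ u ∈ Set.Ioi (0:ℝ),
        HasDerivWithinAt (fun u : ℝ => k / u) (-k / u ^ 2) (Set.Ioi 0) u := by
      intro u hu
      have hu0 : u ≠ 0 := ne_of_gt hu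
      have := (hasDerivAt_inv hu0).const_mul k
      have h2 : HasDerivAt (fun u : ℝ => k / u) (-k / u ^ 2) u := by
        simpa [div_eq_mul_inv, neg_div, mul_div_assoc] using this
      exact h2.hasDerivWithinAt
    have hinj2 : Set.InjOn (fun u : ℝ => k / u) (Set.Ioi 0) := by
      intro a ha b hb hab
      dsimp at hab
      rw [div_eq_div_iff (ne_of_gt ha) (ne_of_gt hb)] at hab
      exact (mul_left_cancel₀ hk.ne' hab).symm
    calc I1 = ∫⁻ u in (fun u : ℝ => k / u) '' Set.Ioi 0,
          ENNReal.ofReal (Real.exp (-(φ u) ^ 2)) := by rw [himg2]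
      _ = ∫⁻ u in Set.Ioi (0:ℝ),
          ENNReal.ofReal |(-k / u ^ 2)| * ENNReal.ofReal (Real.exp (-(φ (k / u)) ^ 2)) :=
          lintegral_image measurableSet_Ioi hderiv2 hinj2 _
      _ = ∫⁻ u in Set.Ioi (0:ℝ),
          ENNReal.ofReal k * ENNReal.ofReal (Real.exp (-(φ u) ^ 2) / u ^ 2) := by
          apply setLIntegral_congr_fun measurableSet_Ioi
          intro u hu
          beta_reduce
          have hu0 : (0:ℝ) < u := hu
          have hφku : φ (k / u) = -φ u := by
            simp only [hφ_def]
            rw [hk_def]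
            field_simp
            ring
          have habs2 : |(-k / u ^ 2)| = k / u ^ 2 := by
            rw [abs_div, abs_neg, abs_of_pos hk, abs_of_pos (by positivity)]
          rw [hφku, neg_sq, habs2,
            ← ENNReal.ofReal_mul (by positivity), ← ENNReal.ofReal_mul hk.le]
          congr 1
          rw [div_mul_eq_mul_div, mul_div_assoc]
      _ = ENNReal.ofReal k * I2 := lintegral_const_mul' _ _ ENNReal.ofReal_ne_top
  -- solve the linear system
  have hI2ne : I2 ≠ ⊤ := by
    intro htop
    rw [htop, ENNReal.mul_top (ENNReal.ofReal_pos.2 hsq).ne', add_top] at R1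
    exact (ENNReal.ofReal_ne_top) R1
  have hcomb : ENNReal.ofReal (2 * sq) * I2 = ENNReal.ofReal (Real.sqrt π) := by
    rw [R1, R2, ← mul_assoc, ← ENNReal.ofReal_mul hsp.le, ← add_mul,
      ← ENNReal.ofReal_add (by positivity) hsq.le]
    congr 2
    rw [hk_def]
    field_simp
    ring
  have hI2 : I2 = ENNReal.ofReal (Real.sqrt π / (2 * sq)) := by
    have h2sq : (0:ℝ) < 2 * sq := by linarith
    have : ENNReal.ofReal (2 * sq) * I2
        = ENNReal.ofReal (2 * sq) * ENNReal.ofReal (Real.sqrt π / (2 * sq)) := by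
      rw [hcomb, ← ENNReal.ofReal_mul h2sq.le, mul_div_cancel₀ _ h2sq.ne']
    exact (ENNReal.mul_right_inj (ENNReal.ofReal_pos.2 h2sq).ne' ENNReal.ofReal_ne_top).mp this
  show I1 = _
  rw [R2, hI2, ← ENNReal.ofReal_mul hk.le]
  congr 1
  rw [hk_def]
  field_simp

/-- The key Laplace-type integral `∫₀^∞ s^{-1/2} e^{-(ps+q/s)} ds`. -/
lemma sqrt_laplace {p q : ℝ} (hp : 0 < p) (hq : 0 < q) :
    ∫⁻ s in Set.Ioi (0:ℝ), ENNReal.ofReal (Real.exp (-(p * s + q / s)) / Real.sqrt s)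
      = ENNReal.ofReal (Real.sqrt π / Real.sqrt p
          * Real.exp (-(2 * (Real.sqrt p * Real.sqrt q)))) := by
  have hsp : 0 < Real.sqrt p := Real.sqrt_pos.2 hp
  have hsq : 0 < Real.sqrt q := Real.sqrt_pos.2 hq
  have himg : (fun u : ℝ => u ^ 2) '' Set.Ioi 0 = Set.Ioi 0 := by
    ext w
    constructor
    · rintro ⟨u, hu, rfl⟩
      exact pow_pos (show (0:ℝ) < u from hu) 2
    · intro hw
      exact ⟨Real.sqrt w, Real.sqrt_pos.2 hw, Real.sq_sqrt (le_of_lt hw)⟩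
  have hderiv : ∀ u ∈ Set.Ioi (0:ℝ),
      HasDerivWithinAt (fun u : ℝ => u ^ 2) (2 * u) (Set.Ioi 0) u := by
    intro u hu
    simpa using (hasDerivAt_pow 2 u).hasDerivWithinAt
  have hinj : Set.InjOn (fun u : ℝ => u ^ 2) (Set.Ioi 0) := by
    intro a ha b hb hab
    have ha0 : (0:ℝ) < a := ha
    have hb0 : (0:ℝ) < b := hb
    dsimp at hab
    nlinarith [sq_nonneg (a - b), sq_nonneg (a + b)]
  calc ∫⁻ s in Set.Ioi (0:ℝ), ENNReal.ofReal (Real.exp (-(p * s + q / s)) / Real.sqrt s)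
      = ∫⁻ s in (fun u : ℝ => u ^ 2) '' Set.Ioi 0,
          ENNReal.ofReal (Real.exp (-(p * s + q / s)) / Real.sqrt s) := by rw [himg]
    _ = ∫⁻ u in Set.Ioi (0:ℝ), ENNReal.ofReal |2 * u|
          * ENNReal.ofReal (Real.exp (-(p * u ^ 2 + q / u ^ 2)) / Real.sqrt (u ^ 2)) :=
        lintegral_image measurableSet_Ioi hderiv hinj _
    _ = ∫⁻ u in Set.Ioi (0:ℝ), ENNReal.ofReal (2 * Real.exp (-(2 * (Real.sqrt p * Real.sqrt q))))
          * ENNReal.ofReal (Real.exp (-(Real.sqrt p * u - Real.sqrt q / u) ^ 2)) := by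
        apply setLIntegral_congr_fun measurableSet_Ioi
        intro u hu
        beta_reduce
        have hu0 : (0:ℝ) < u := hu
        rw [← ENNReal.ofReal_mul (by positivity), ← ENNReal.ofReal_mul (by positivity)]
        congr 1
        rw [abs_of_pos (by positivity), Real.sqrt_sq hu0.le]
        have hexp : p * u ^ 2 + q / u ^ 2
            = (Real.sqrt p * u - Real.sqrt q / u) ^ 2 + 2 * (Real.sqrt p * Real.sqrt q) := by
          have e1 : Real.sqrt p ^ 2 = p := Real.sq_sqrt hp.le
          have e2 : Real.sqrt q ^ 2 = q := Real.sq_sqrt hq.le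
          field_simp
          ring_nf
          linear_combination (-(u^4)) * e1 - e2
        rw [hexp, neg_add, Real.exp_add]
        field_simp
    _ = ENNReal.ofReal (2 * Real.exp (-(2 * (Real.sqrt p * Real.sqrt q))))
          * ENNReal.ofReal (Real.sqrt π / (2 * Real.sqrt p)) := by
        rw [lintegral_const_mul' _ _ ENNReal.ofReal_ne_top, glasser hp hq]
    _ = ENNReal.ofReal (Real.sqrt π / Real.sqrt p
          * Real.exp (-(2 * (Real.sqrt p * Real.sqrt q)))) := by
        rw [← ENNReal.ofReal_mul (by positivity)]
        congr 1
        field_simp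

/-- The inner Gaussian-tail integral. -/
lemma tail_integral {c b : ℝ} (hc : 0 < c) (hb : 0 ≤ b) :
    ∫⁻ y in Set.Ioi b, ENNReal.ofReal (y / c ^ ((3:ℝ)/2) * Real.exp (-y ^ 2 / (2 * c)))
      = ENNReal.ofReal (Real.exp (-b ^ 2 / (2 * c)) / Real.sqrt c) := by
  have hsc : 0 < Real.sqrt c := Real.sqrt_pos.2 hc
  have hc32 : c ^ ((3:ℝ)/2) = c * Real.sqrt c := by
    rw [Real.sqrt_eq_rpow, show (3:ℝ)/2 = 1 + 1/2 by norm_num, Real.rpow_add hc,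
      Real.rpow_one]
  -- FTC setup
  set g : ℝ → ℝ := fun y => -Real.exp (-y ^ 2 / (2 * c)) / Real.sqrt c with hg_def
  set g' : ℝ → ℝ := fun y => y / (c * Real.sqrt c) * Real.exp (-y ^ 2 / (2 * c)) with hg'_def
  have hderiv : ∀ y : ℝ, HasDerivAt g (g' y) y := by
    intro y
    have h1 : HasDerivAt (fun y : ℝ => -y ^ 2 / (2 * c)) (-y / c) y := by
      have := ((hasDerivAt_pow 2 y).neg).div_const (2 * c)
      refine this.congr_deriv ?_
      push_cast
      field_simp
    have h2 := (h1.exp).neg.div_const (Real.sqrt c)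
    refine h2.congr_deriv ?_
    simp only [hg'_def]
    field_simp
  have hpos : ∀ y ∈ Set.Ioi b, 0 ≤ g' y := by
    intro y hy
    have : 0 < y := lt_of_le_of_lt hb hy
    have := Real.exp_nonneg (-y ^ 2 / (2 * c))
    positivity
  have htend : Tendsto g atTop (nhds 0) := by
    have h1 : Tendsto (fun y : ℝ => -y ^ 2 / (2 * c)) atTop atBot := by
      apply Tendsto.atBot_div_const (by linarith)
      simpa using (tendsto_pow_atTop (two_ne_zero)).neg
    have h2 := (Real.tendsto_exp_atBot.comp h1).neg.div_const (Real.sqrt c)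
    simpa using h2
  have hval : ∫ y in Set.Ioi b, g' y = Real.exp (-b ^ 2 / (2 * c)) / Real.sqrt c := by
    rw [integral_Ioi_of_hasDerivAt_of_nonneg' (fun y _ => hderiv y) hpos htend]
    simp only [hg_def]
    ring
  have hint : IntegrableOn g' (Set.Ioi b) :=
    integrableOn_Ioi_deriv_of_nonneg' (fun y _ => hderiv y) hpos htend
  rw [show (fun y => ENNReal.ofReal (y / c ^ ((3:ℝ)/2) * Real.exp (-y ^ 2 / (2 * c))))
      = fun y => ENNReal.ofReal (g' y) by
    funext y
    rw [hc32]]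
  rw [← ofReal_integral_eq_lintegral_ofReal hint]
  · rw [hval]
  · rw [Filter.EventuallyLE, ae_restrict_iff' measurableSet_Ioi]
    exact Filter.Eventually.of_forall fun y hy => hpos y hy

/-- The full `(t,x)`-integral for fixed `(u,v)`. -/
lemma Jlem (l : ℝ) (hl : 0 ≤ l) (u v : ℝ) (hu : 0 < u) (hv : v < u) :
    ∫⁻ t : ℝ, ∫⁻ x : ℝ, Set.indicator {pp : ℝ × ℝ | u < pp.1 ∧ pp.2 < pp.1}
        (fun pp => ENNReal.ofReal (Real.exp (-l * pp.1) * Real.sqrt (2/π) *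
          ((2*pp.1 - pp.2 - v) / (pp.1 - u) ^ ((3:ℝ)/2) *
            Real.exp (-(2*pp.1 - pp.2 - v)^2 / (2*(pp.1 - u)))))) (t, x)
      = ENNReal.ofReal (2 / Real.sqrt (1+2*l)
          * Real.exp (-(l*u + (u-v)*(1+Real.sqrt (1+2*l))))) := by
  set a : ℝ := u - v with ha_def
  have ha : 0 < a := by simp [ha_def]; linarith
  -- Step 1: inner x-integral for fixed t
  have step1 : ∀ t : ℝ, u < t →
      (∫⁻ x : ℝ, Set.indicator {pp : ℝ × ℝ | u < pp.1 ∧ pp.2 < pp.1}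
        (fun pp => ENNReal.ofReal (Real.exp (-l * pp.1) * Real.sqrt (2/π) *
          ((2*pp.1 - pp.2 - v) / (pp.1 - u) ^ ((3:ℝ)/2) *
            Real.exp (-(2*pp.1 - pp.2 - v)^2 / (2*(pp.1 - u)))))) (t, x))
      = ENNReal.ofReal (Real.exp (-l * t) * Real.sqrt (2/π))
        * ENNReal.ofReal (Real.exp (-(t-v)^2 / (2*(t-u))) / Real.sqrt (t-u)) := by
    intro t ht
    have hc : 0 < t - u := by linarith
    have hb : 0 < t - v := by linarith
    set f : ℝ → ℝ≥0∞ := Set.indicator (Set.Ioi (t - v))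
      (fun y => ENNReal.ofReal (y / (t-u) ^ ((3:ℝ)/2) * Real.exp (-y^2 / (2*(t-u))))) with hf_def
    have hfmeas : Measurable f := by
      apply Measurable.indicator _ measurableSet_Ioi
      exact ((measurable_id.div_const _).mul
        (((measurable_id.pow_const 2).neg.div_const _).exp)).ennreal_ofReal
    calc (∫⁻ x : ℝ, Set.indicator {pp : ℝ × ℝ | u < pp.1 ∧ pp.2 < pp.1}
        (fun pp => ENNReal.ofReal (Real.exp (-l * pp.1) * Real.sqrt (2/π) *
          ((2*pp.1 - pp.2 - v) / (pp.1 - u) ^ ((3:ℝ)/2) *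
            Real.exp (-(2*pp.1 - pp.2 - v)^2 / (2*(pp.1 - u)))))) (t, x))
        = ∫⁻ x : ℝ, ENNReal.ofReal (Real.exp (-l * t) * Real.sqrt (2/π))
            * f (2*t - v + (-x)) := by
          apply lintegral_congr
          intro x
          by_cases hx : x < t
          · rw [Set.indicator_of_mem (show (t,x) ∈ {pp : ℝ × ℝ | u < pp.1 ∧ pp.2 < pp.1} from ⟨ht, hx⟩),
              hf_def, Set.indicator_of_mem (by simp only [Set.mem_Ioi]; linarith)]
            rw [← ENNReal.ofReal_mul (by positivity)]
            congr 1
            have e : 2*t - v + (-x) = 2*t - x - v := by ring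
            rw [e]
          · rw [Set.indicator_of_notMem (by simp only [Set.mem_setOf_eq, not_and]; exact fun _ => hx),
              hf_def, Set.indicator_of_notMem (by simp only [Set.mem_Ioi, not_lt]; linarith)]
            rw [mul_zero]
      _ = ENNReal.ofReal (Real.exp (-l * t) * Real.sqrt (2/π))
            * ∫⁻ x : ℝ, f (2*t - v + (-x)) := lintegral_const_mul' _ _ ENNReal.ofReal_ne_top
      _ = ENNReal.ofReal (Real.exp (-l * t) * Real.sqrt (2/π))
            * ∫⁻ y : ℝ, f y := by
          congr 1
          have h1 : ∫⁻ x : ℝ, f (2*t - v + (-x)) = ∫⁻ x : ℝ, f (2*t - v + x) :=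
            lintegral_neg_self (fun x => f (2*t - v + x))
              (hfmeas.comp (measurable_const.add measurable_id))
          rw [h1]
          exact lintegral_add_left_eq_self f (2*t - v)
      _ = ENNReal.ofReal (Real.exp (-l * t) * Real.sqrt (2/π))
            * ENNReal.ofReal (Real.exp (-(t-v)^2 / (2*(t-u))) / Real.sqrt (t-u)) := by
          congr 1
          rw [hf_def, lintegral_indicator measurableSet_Ioi]
          exact tail_integral hc hb.le
  -- Step 2: outer t-integral
  set Φ : ℝ → ℝ := fun t => Real.exp (-l * t) * Real.sqrt (2/π)
    * (Real.exp (-(t-v)^2 / (2*(t-u))) / Real.sqrt (t-u)) with hΦ_def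
  have step2 : (∫⁻ t : ℝ, ∫⁻ x : ℝ, Set.indicator {pp : ℝ × ℝ | u < pp.1 ∧ pp.2 < pp.1}
        (fun pp => ENNReal.ofReal (Real.exp (-l * pp.1) * Real.sqrt (2/π) *
          ((2*pp.1 - pp.2 - v) / (pp.1 - u) ^ ((3:ℝ)/2) *
            Real.exp (-(2*pp.1 - pp.2 - v)^2 / (2*(pp.1 - u)))))) (t, x))
      = ∫⁻ t : ℝ, Set.indicator (Set.Ioi u) (fun t => ENNReal.ofReal (Φ t)) t := by
    apply lintegral_congr
    intro t
    by_cases ht : u < t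
    · rw [step1 t ht, Set.indicator_of_mem (show t ∈ Set.Ioi u from ht),
        ← ENNReal.ofReal_mul (by positivity)]
    · rw [Set.indicator_of_notMem (show t ∉ Set.Ioi u from ht)]
      calc (∫⁻ x : ℝ, Set.indicator {pp : ℝ × ℝ | u < pp.1 ∧ pp.2 < pp.1} _ (t, x))
          = ∫⁻ _ : ℝ, (0:ℝ≥0∞) := by
            apply lintegral_congr
            intro x
            exact Set.indicator_of_notMem
              (by simp only [Set.mem_setOf_eq, not_and]; exact fun h => absurd h ht) _
        _ = 0 := lintegral_zero
  rw [step2]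
  -- Step 3: shift t = s + u
  have step3 : (∫⁻ t : ℝ, Set.indicator (Set.Ioi u) (fun t => ENNReal.ofReal (Φ t)) t)
      = ∫⁻ s in Set.Ioi (0:ℝ), ENNReal.ofReal (Φ (s + u)) := by
    rw [← lintegral_indicator measurableSet_Ioi]
    rw [← lintegral_add_right_eq_self
      (fun t => Set.indicator (Set.Ioi u) (fun t => ENNReal.ofReal (Φ t)) t) u]
    apply lintegral_congr
    intro s
    by_cases hs : 0 < s
    · rw [Set.indicator_of_mem (by simp only [Set.mem_Ioi]; linarith : s + u ∈ Set.Ioi u),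
        Set.indicator_of_mem (show s ∈ Set.Ioi (0:ℝ) from hs)]
    · rw [Set.indicator_of_notMem
        (show s + u ∉ Set.Ioi u by simp only [Set.mem_Ioi]; intro hc; exact hs (by linarith)),
        Set.indicator_of_notMem (show s ∉ Set.Ioi (0:ℝ) from hs)]
  rw [step3]
  -- Step 4: rewrite the integrand into the Laplace form
  set P : ℝ := (1 + 2*l)/2 with hP_def
  set Q : ℝ := a^2/2 with hQ_def
  have hP : 0 < P := by rw [hP_def]; linarith
  have hQ : 0 < Q := by rw [hQ_def]; positivity
  have step4 : (∫⁻ s in Set.Ioi (0:ℝ), ENNReal.ofReal (Φ (s + u)))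
      = ENNReal.ofReal (Real.sqrt (2/π) * Real.exp (-(l*u + a)))
        * ∫⁻ s in Set.Ioi (0:ℝ), ENNReal.ofReal (Real.exp (-(P * s + Q / s)) / Real.sqrt s) := by
    rw [← lintegral_const_mul' _ _ ENNReal.ofReal_ne_top]
    apply setLIntegral_congr_fun measurableSet_Ioi
    intro s hs
    beta_reduce
    have hs0 : (0:ℝ) < s := hs
    rw [← ENNReal.ofReal_mul (by positivity)]
    congr 1
    simp only [hΦ_def]
    rw [show s + u - u = s by ring, show s + u - v = s + a by rw [ha_def]; ring]
    have hexp : Real.exp (-l * (s + u)) * Real.exp (-(s+a)^2 / (2*s))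
        = Real.exp (-(l*u + a)) * Real.exp (-(P * s + Q / s)) := by
      rw [← Real.exp_add, ← Real.exp_add]
      congr 1
      rw [hP_def, hQ_def]
      field_simp
      ring
    linear_combination (Real.sqrt (2/π) / Real.sqrt s) * hexp
  rw [step4, sqrt_laplace hP hQ]
  -- Step 5: final constant computation
  rw [← ENNReal.ofReal_mul (by positivity)]
  congr 1
  set S : ℝ := Real.sqrt (1 + 2*l) with hS_def
  have hS2 : S^2 = 1 + 2*l := Real.sq_sqrt (by linarith)
  have hS : 0 < S := Real.sqrt_pos.2 (by linarith)
  have h2 : Real.sqrt 2 * Real.sqrt 2 = 2 := Real.mul_self_sqrt (by norm_num)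
  have hsqrt2 : 0 < Real.sqrt 2 := Real.sqrt_pos.2 (by norm_num)
  have hsqrtpi : 0 < Real.sqrt π := Real.sqrt_pos.2 Real.pi_pos
  have hPQ : Real.sqrt P * Real.sqrt Q = S * a / 2 := by
    rw [← Real.sqrt_mul hP.le, show P * Q = (S * a / 2)^2 by
      rw [hP_def, hQ_def]; linear_combination (-(a^2)/4) * hS2]
    exact Real.sqrt_sq (by positivity)
  have hsqrtP : Real.sqrt P = S / Real.sqrt 2 := by
    rw [hP_def, Real.sqrt_div (by linarith : (0:ℝ) ≤ 1 + 2*l) 2, hS_def]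
  have hcoef : Real.sqrt (2/π) * (Real.sqrt π / Real.sqrt P) = 2 / S := by
    rw [hsqrtP, Real.sqrt_div (by norm_num : (0:ℝ) ≤ 2) π]
    field_simp
    linear_combination h2
  have hexp2 : Real.exp (-(l*u + a)) * Real.exp (-(2 * (Real.sqrt P * Real.sqrt Q)))
      = Real.exp (-(l*u + a*(1+S))) := by
    rw [hPQ, ← Real.exp_add]
    congr 1
    ring
  calc Real.sqrt (2/π) * Real.exp (-(l*u + a))
        * (Real.sqrt π / Real.sqrt P * Real.exp (-(2 * (Real.sqrt P * Real.sqrt Q))))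
      = (Real.sqrt (2/π) * (Real.sqrt π / Real.sqrt P))
        * (Real.exp (-(l*u + a)) * Real.exp (-(2 * (Real.sqrt P * Real.sqrt Q)))) := by ring
    _ = 2 / S * Real.exp (-(l*u + a*(1+S))) := by rw [hcoef, hexp2]

lemma nest (T : ℝ) (W : ℝ → ℝ → ℝ≥0∞) (hW : Measurable (Function.uncurry W)) :
    ∫⁻ u in Set.Ioo 0 T, ∫⁻ v in Set.Iio u, W u v
      = ∫⁻ q : ℝ × ℝ, Set.indicator {q : ℝ × ℝ | (0 < q.1 ∧ q.1 < T) ∧ q.2 < q.1}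
          (fun q => W q.1 q.2) q := by
  have hset : MeasurableSet {q : ℝ × ℝ | (0 < q.1 ∧ q.1 < T) ∧ q.2 < q.1} :=
    (((measurableSet_lt measurable_const measurable_fst).inter
      (measurableSet_lt measurable_fst measurable_const)).inter
      (measurableSet_lt measurable_snd measurable_fst))
  rw [Measure.volume_eq_prod, lintegral_prod _ (((show Measurable fun q : ℝ × ℝ => W q.1 q.2 from hW).indicator hset).aemeasurable)]
  rw [← lintegral_indicator measurableSet_Ioo]
  apply lintegral_congr
  intro u
  by_cases hu : u ∈ Set.Ioo (0:ℝ) T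
  · rw [Set.indicator_of_mem hu]
    have key : ∀ v : ℝ, Set.indicator {q : ℝ × ℝ | (0 < q.1 ∧ q.1 < T) ∧ q.2 < q.1}
        (fun q => W q.1 q.2) (u, v) = Set.indicator (Set.Iio u) (W u) v := by
      intro v
      by_cases hv : v < u
      · rw [Set.indicator_of_mem (show (u,v) ∈ {q : ℝ × ℝ | (0 < q.1 ∧ q.1 < T) ∧ q.2 < q.1}
            from ⟨⟨hu.1, hu.2⟩, hv⟩),
          Set.indicator_of_mem (show v ∈ Set.Iio u from hv)]
      · rw [Set.indicator_of_notMem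
            (show (u,v) ∉ {q : ℝ × ℝ | (0 < q.1 ∧ q.1 < T) ∧ q.2 < q.1}
              from fun hmem => hv hmem.2),
          Set.indicator_of_notMem (show v ∉ Set.Iio u from hv)]
    rw [lintegral_congr key, lintegral_indicator measurableSet_Iio]
  · rw [Set.indicator_of_notMem hu]
    symm
    calc ∫⁻ v : ℝ, Set.indicator {q : ℝ × ℝ | (0 < q.1 ∧ q.1 < T) ∧ q.2 < q.1}
          (fun q => W q.1 q.2) (u, v)
        = ∫⁻ _ : ℝ, (0:ℝ≥0∞) := lintegral_congr fun v =>
            Set.indicator_of_notMem (fun hmem => hu ⟨hmem.1.1, hmem.1.2⟩) _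
      _ = 0 := lintegral_zero

end LambdaAux

open LambdaAux

theorem Lambda_laplace_identity (l : ℝ) (hl : 0 ≤ l) (h : ℝ → ℝ → ℝ≥0∞)
    (hmeas : Measurable fun p : ℝ × ℝ => h p.1 p.2) :
    ∫⁻ p : ℝ × ℝ in {p : ℝ × ℝ | 0 < p.1 ∧ p.2 < p.1},
        ENNReal.ofReal (Real.exp (-l * p.1)) *
          (ENNReal.ofReal (Real.sqrt (2 / π)) *
            ∫⁻ u in Set.Ioo 0 p.1, ∫⁻ v in Set.Iio u,
              ENNReal.ofReal ((2 * p.1 - p.2 - v) / (p.1 - u) ^ ((3 : ℝ) / 2) *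
                Real.exp (-(2 * p.1 - p.2 - v) ^ 2 / (2 * (p.1 - u)))) * h u v)
      = ENNReal.ofReal (2 / Real.sqrt (1 + 2 * l)) *
          ∫⁻ p : ℝ × ℝ in {p : ℝ × ℝ | 0 < p.1 ∧ p.2 < p.1},
            ENNReal.ofReal
              (Real.exp (-(l * p.1 + (p.1 - p.2) * (1 + Real.sqrt (1 + 2 * l))))) *
              h p.1 p.2 := by
  have hD : MeasurableSet {p : ℝ × ℝ | 0 < p.1 ∧ p.2 < p.1} :=
    (measurableSet_lt measurable_const measurable_fst).inter
      (measurableSet_lt measurable_snd measurable_fst)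
  set B : Set ((ℝ × ℝ) × (ℝ × ℝ)) :=
    {r | 0 < r.2.1 ∧ r.2.2 < r.2.1 ∧ r.2.1 < r.1.1 ∧ r.1.2 < r.1.1} with hB_def
  have hB : MeasurableSet B := by
    apply MeasurableSet.inter
    · exact measurableSet_lt measurable_const measurable_snd.fst
    apply MeasurableSet.inter
    · exact measurableSet_lt measurable_snd.snd measurable_snd.fst
    apply MeasurableSet.inter
    · exact measurableSet_lt measurable_snd.fst measurable_fst.fst
    · exact measurableSet_lt measurable_fst.snd measurable_fst.fst
  set Gf : (ℝ × ℝ) × (ℝ × ℝ) → ℝ≥0∞ := fun r =>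
    ENNReal.ofReal (Real.exp (-l * r.1.1) * Real.sqrt (2/π) *
      ((2*r.1.1 - r.1.2 - r.2.2) / (r.1.1 - r.2.1) ^ ((3:ℝ)/2) *
        Real.exp (-(2*r.1.1 - r.1.2 - r.2.2)^2 / (2*(r.1.1 - r.2.1))))) * h r.2.1 r.2.2
    with hGf_def
  have hnum : Measurable fun r : (ℝ × ℝ) × (ℝ × ℝ) => 2*r.1.1 - r.1.2 - r.2.2 :=
    ((measurable_fst.fst.const_mul 2).sub measurable_fst.snd).sub measurable_snd.snd
  have hden : Measurable fun r : (ℝ × ℝ) × (ℝ × ℝ) => r.1.1 - r.2.1 :=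
    measurable_fst.fst.sub measurable_snd.fst
  have hGfmeas : Measurable Gf := by
    apply Measurable.mul
    · apply Measurable.ennreal_ofReal
      apply Measurable.mul
      · exact (measurable_fst.fst.const_mul (-l)).exp.mul measurable_const
      · apply Measurable.mul
        · exact hnum.div (hden.pow measurable_const)
        · exact (((hnum.pow_const 2).neg).div (hden.const_mul 2)).exp
    · exact hmeas.comp measurable_snd
  set G : (ℝ × ℝ) → (ℝ × ℝ) → ℝ≥0∞ := fun p q => Set.indicator B Gf (p, q) with hG_def
  have hGmeas : Measurable fun r : (ℝ × ℝ) × (ℝ × ℝ) => G r.1 r.2 := by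
    have : (fun r : (ℝ × ℝ) × (ℝ × ℝ) => G r.1 r.2) = Set.indicator B Gf := by
      funext r
      rw [hG_def]
    rw [this]
    exact hGfmeas.indicator hB
  -- LHS = double lintegral of G
  have EqLHS : (∫⁻ p : ℝ × ℝ in {p : ℝ × ℝ | 0 < p.1 ∧ p.2 < p.1},
        ENNReal.ofReal (Real.exp (-l * p.1)) *
          (ENNReal.ofReal (Real.sqrt (2 / π)) *
            ∫⁻ u in Set.Ioo 0 p.1, ∫⁻ v in Set.Iio u,
              ENNReal.ofReal ((2 * p.1 - p.2 - v) / (p.1 - u) ^ ((3 : ℝ) / 2) *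
                Real.exp (-(2 * p.1 - p.2 - v) ^ 2 / (2 * (p.1 - u)))) * h u v))
      = ∫⁻ p : ℝ × ℝ, ∫⁻ q : ℝ × ℝ, G p q := by
    rw [← lintegral_indicator hD]
    apply lintegral_congr
    intro p
    by_cases hp : p ∈ {p : ℝ × ℝ | 0 < p.1 ∧ p.2 < p.1}
    · rw [Set.indicator_of_mem hp]
      obtain ⟨hp1, hp2⟩ := hp
      have hWmeas : Measurable (Function.uncurry (fun u v =>
          ENNReal.ofReal ((2 * p.1 - p.2 - v) / (p.1 - u) ^ ((3 : ℝ) / 2) *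
            Real.exp (-(2 * p.1 - p.2 - v) ^ 2 / (2 * (p.1 - u)))) * h u v)) := by
        have hn : Measurable fun q : ℝ × ℝ => 2 * p.1 - p.2 - q.2 :=
          measurable_const.sub measurable_snd
        have hd : Measurable fun q : ℝ × ℝ => p.1 - q.1 :=
          measurable_const.sub measurable_fst
        exact ((hn.div (hd.pow measurable_const)).mul
          (((hn.pow_const 2).neg.div (hd.const_mul 2)).exp)).ennreal_ofReal.mul hmeas
      rw [nest p.1 _ hWmeas]
      rw [← mul_assoc, ← lintegral_const_mul' _ _
        (ENNReal.mul_ne_top ENNReal.ofReal_ne_top ENNReal.ofReal_ne_top)]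
      apply lintegral_congr
      intro q
      by_cases hq : q ∈ {q : ℝ × ℝ | (0 < q.1 ∧ q.1 < p.1) ∧ q.2 < q.1}
      · have e1 : G p q = B.indicator Gf (p, q) := rfl
        rw [Set.indicator_of_mem hq, e1,
          Set.indicator_of_mem (show (p, q) ∈ B from ⟨hq.1.1, hq.2, hq.1.2, hp2⟩)]
        have e2 : Gf (p, q) = ENNReal.ofReal (Real.exp (-l * p.1) * Real.sqrt (2/π) *
            ((2*p.1 - p.2 - q.2) / (p.1 - q.1) ^ ((3:ℝ)/2) *
              Real.exp (-(2*p.1 - p.2 - q.2)^2 / (2*(p.1 - q.1))))) * h q.1 q.2 := rfl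
        rw [e2, ENNReal.ofReal_mul
            (show (0:ℝ) ≤ Real.exp (-l * p.1) * Real.sqrt (2/π) by positivity),
          ENNReal.ofReal_mul (Real.exp_nonneg (-l * p.1))]
        ring
      · have e1 : G p q = B.indicator Gf (p, q) := rfl
        rw [Set.indicator_of_notMem hq, e1,
          Set.indicator_of_notMem (show (p, q) ∉ B from
            fun hmem => hq ⟨⟨hmem.1, hmem.2.2.1⟩, hmem.2.1⟩)]
        rw [mul_zero]
    · rw [Set.indicator_of_notMem hp]
      symm
      calc ∫⁻ q : ℝ × ℝ, G p q
          = ∫⁻ _ : ℝ × ℝ, (0:ℝ≥0∞) := lintegral_congr fun q => by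
            have e1 : G p q = B.indicator Gf (p, q) := rfl
            rw [e1]
            exact Set.indicator_of_notMem (fun hmem =>
              hp ⟨lt_trans hmem.1 hmem.2.2.1, hmem.2.2.2⟩) _
        _ = 0 := lintegral_zero
  -- RHS = swapped double lintegral of G
  have EqRHS : (∫⁻ q : ℝ × ℝ, ∫⁻ p : ℝ × ℝ, G p q)
      = ENNReal.ofReal (2 / Real.sqrt (1 + 2 * l)) *
          ∫⁻ p : ℝ × ℝ in {p : ℝ × ℝ | 0 < p.1 ∧ p.2 < p.1},
            ENNReal.ofReal
              (Real.exp (-(l * p.1 + (p.1 - p.2) * (1 + Real.sqrt (1 + 2 * l))))) *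
              h p.1 p.2 := by
    rw [← lintegral_indicator hD, ← lintegral_const_mul' _ _ ENNReal.ofReal_ne_top]
    apply lintegral_congr
    intro q
    by_cases hq : q ∈ {p : ℝ × ℝ | 0 < p.1 ∧ p.2 < p.1}
    · obtain ⟨hq1, hq2⟩ := hq
      have hBq : MeasurableSet {pp : ℝ × ℝ | q.1 < pp.1 ∧ pp.2 < pp.1} :=
        (measurableSet_lt measurable_const measurable_fst).inter
          (measurableSet_lt measurable_snd measurable_fst)
      have hcmeas : Measurable (Set.indicator {pp : ℝ × ℝ | q.1 < pp.1 ∧ pp.2 < pp.1}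
          (fun pp => ENNReal.ofReal (Real.exp (-l * pp.1) * Real.sqrt (2/π) *
            ((2*pp.1 - pp.2 - q.2) / (pp.1 - q.1) ^ ((3:ℝ)/2) *
              Real.exp (-(2*pp.1 - pp.2 - q.2)^2 / (2*(pp.1 - q.1))))))) := by
        apply Measurable.indicator _ hBq
        have hn : Measurable fun pp : ℝ × ℝ => 2 * pp.1 - pp.2 - q.2 :=
          ((measurable_fst.const_mul 2).sub measurable_snd).sub measurable_const
        have hd : Measurable fun pp : ℝ × ℝ => pp.1 - q.1 :=
          measurable_fst.sub measurable_const
        exact (((measurable_fst.const_mul (-l)).exp.mul measurable_const).mul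
          ((hn.div (hd.pow measurable_const)).mul
            (((hn.pow_const 2).neg.div (hd.const_mul 2)).exp))).ennreal_ofReal
      calc ∫⁻ p : ℝ × ℝ, G p q
          = ∫⁻ p : ℝ × ℝ, Set.indicator {pp : ℝ × ℝ | q.1 < pp.1 ∧ pp.2 < pp.1}
              (fun pp => ENNReal.ofReal (Real.exp (-l * pp.1) * Real.sqrt (2/π) *
                ((2*pp.1 - pp.2 - q.2) / (pp.1 - q.1) ^ ((3:ℝ)/2) *
                  Real.exp (-(2*pp.1 - pp.2 - q.2)^2 / (2*(pp.1 - q.1)))))) p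
              * h q.1 q.2 := by
            apply lintegral_congr
            intro p
            by_cases hpB : p ∈ {pp : ℝ × ℝ | q.1 < pp.1 ∧ pp.2 < pp.1}
            · have e1 : G p q = B.indicator Gf (p, q) := rfl
              rw [Set.indicator_of_mem hpB, e1,
                Set.indicator_of_mem (show (p, q) ∈ B from ⟨hq1, hq2, hpB.1, hpB.2⟩)]
            · have e1 : G p q = B.indicator Gf (p, q) := rfl
              rw [Set.indicator_of_notMem hpB, e1,
                Set.indicator_of_notMem (show (p, q) ∉ B from
                  fun hmem => hpB ⟨hmem.2.2.1, hmem.2.2.2⟩), zero_mul]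
        _ = (∫⁻ p : ℝ × ℝ, Set.indicator {pp : ℝ × ℝ | q.1 < pp.1 ∧ pp.2 < pp.1}
              (fun pp => ENNReal.ofReal (Real.exp (-l * pp.1) * Real.sqrt (2/π) *
                ((2*pp.1 - pp.2 - q.2) / (pp.1 - q.1) ^ ((3:ℝ)/2) *
                  Real.exp (-(2*pp.1 - pp.2 - q.2)^2 / (2*(pp.1 - q.1)))))) p)
              * h q.1 q.2 := lintegral_mul_const _ hcmeas
        _ = ENNReal.ofReal (2 / Real.sqrt (1+2*l)
              * Real.exp (-(l*q.1 + (q.1-q.2)*(1+Real.sqrt (1+2*l))))) * h q.1 q.2 := by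
            congr 1
            rw [Measure.volume_eq_prod, lintegral_prod _ hcmeas.aemeasurable]
            exact Jlem l hl q.1 q.2 hq1 hq2
        _ = ENNReal.ofReal (2 / Real.sqrt (1 + 2 * l)) *
              Set.indicator {p : ℝ × ℝ | 0 < p.1 ∧ p.2 < p.1}
                (fun p => ENNReal.ofReal
                  (Real.exp (-(l * p.1 + (p.1 - p.2) * (1 + Real.sqrt (1 + 2 * l))))) *
                  h p.1 p.2) q := by
            rw [Set.indicator_of_mem (show q ∈ {p : ℝ × ℝ | 0 < p.1 ∧ p.2 < p.1} from ⟨hq1, hq2⟩),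
              ENNReal.ofReal_mul (by positivity), mul_assoc]
    · rw [Set.indicator_of_notMem hq, mul_zero]
      calc ∫⁻ p : ℝ × ℝ, G p q
          = ∫⁻ _ : ℝ × ℝ, (0:ℝ≥0∞) := lintegral_congr fun p => by
            have e1 : G p q = B.indicator Gf (p, q) := rfl
            rw [e1]
            exact Set.indicator_of_notMem (fun hmem => hq ⟨hmem.1, hmem.2.1⟩) _
        _ = 0 := lintegral_zero
  rw [EqLHS, lintegral_lintegral_swap hGmeas.aemeasurable, EqRHS]
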